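/- Let S₁, …, S_m be subspaces of Hermitian operators each containing the identity, let n = dim(S₁ ⊗ ⋯ ⊗ S_m), and let Φ be a linear super-operator on S₁ ⊗ ⋯ ⊗ S_m which maps every (S₁;…;S_m)-separable operator to a positive semidefinite operator. Then for every X ∈ S₁ ⊗ ⋯ ⊗ S_m, ‖Φ(X)‖ ≤ 2^{m−1} √n (n+1) ‖X‖_F ‖Φ(I)‖. -/

import Mathlib

set_option linter.unusedSectionVars false
set_option linter.unusedVariables false
set_option synthInstance.maxHeartbeats 1000000
set_option maxHeartbeats 1000000


open Matrix
open scoped ComplexOrder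

variable {m : ℕ} {d : Fin m → ℕ}

/-- The elementary tensor product of matrices `P i`, as a matrix on the product space. -/
def prodMat (P : ∀ i, Matrix (Fin (d i)) (Fin (d i)) ℂ) :
    Matrix (∀ i, Fin (d i)) (∀ i, Fin (d i)) ℂ :=
  Matrix.of fun p q => ∏ i, P i (p i) (q i)

/-- The subspace `S₁ ⊗ ⋯ ⊗ S_m`, i.e. the real span of elementary tensor products of
elements of the subspaces `S i`. -/
noncomputable def tensorSpan (S : ∀ i, Submodule ℝ (Matrix (Fin (d i)) (Fin (d i)) ℂ)) :
    Submodule ℝ (Matrix (∀ i, Fin (d i)) (∀ i, Fin (d i)) ℂ) :=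
  Submodule.span ℝ {X | ∃ P : ∀ i, Matrix (Fin (d i)) (Fin (d i)) ℂ,
    (∀ i, P i ∈ S i) ∧ X = prodMat P}

/-- `(S₁;…;S_m)`-separability: a finite sum of elementary tensor products of positive
semidefinite elements of the subspaces `S i`. -/
def IsSep (S : ∀ i, Submodule ℝ (Matrix (Fin (d i)) (Fin (d i)) ℂ))
    (X : Matrix (∀ i, Fin (d i)) (∀ i, Fin (d i)) ℂ) : Prop :=
  ∃ (k : ℕ) (P : Fin k → ∀ i, Matrix (Fin (d i)) (Fin (d i)) ℂ),
    (∀ j i, P j i ∈ S i ∧ (P j i).PosSemidef) ∧ X = ∑ j, prodMat (P j)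

/-- The operator (spectral) norm of a complex matrix. -/
noncomputable def opNorm {n : Type*} [Fintype n] [DecidableEq n] (A : Matrix n n ℂ) : ℝ :=
  ‖Matrix.toEuclideanCLM (𝕜 := ℂ) A‖

/-- The Frobenius norm of a complex matrix. -/
noncomputable def frobNorm {n : Type*} [Fintype n] (A : Matrix n n ℂ) : ℝ :=
  Real.sqrt (∑ p, ∑ q, ‖A p q‖ ^ 2)


section A
variable {n : Type*} [Fintype n] [DecidableEq n]

lemma opNorm_nonneg (A : Matrix n n ℂ) : 0 ≤ opNorm A := norm_nonneg _

lemma frobNorm_nonneg (A : Matrix n n ℂ) : 0 ≤ frobNorm A := Real.sqrt_nonneg _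

lemma real_smul_mat (r : ℝ) (A : Matrix n n ℂ) : r • A = (r : ℂ) • A := by
  ext p q; simp [Matrix.smul_apply, Complex.real_smul]

lemma opNorm_smul (r : ℝ) (A : Matrix n n ℂ) : opNorm (r • A) = |r| * opNorm A := by
  rw [opNorm, real_smul_mat, _root_.map_smul]
  rw [norm_smul (r : ℂ) (Matrix.toEuclideanCLM (𝕜 := ℂ) A), Complex.norm_real, Real.norm_eq_abs,
    opNorm]

lemma opNorm_sum {ι : Type*} (s : Finset ι) (f : ι → Matrix n n ℂ) :
    opNorm (∑ i ∈ s, f i) ≤ ∑ i ∈ s, opNorm (f i) := by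
  rw [opNorm, map_sum]
  exact norm_sum_le _ _

lemma psd_nonneg_clm {A : Matrix n n ℂ} (hA : A.PosSemidef) :
    (0 : EuclideanSpace ℂ n →L[ℂ] EuclideanSpace ℂ n) ≤ Matrix.toEuclideanCLM (𝕜 := ℂ) A := by
  rw [ContinuousLinearMap.nonneg_iff_isPositive]
  constructor
  · rw [← ContinuousLinearMap.isSelfAdjoint_iff_isSymmetric, isSelfAdjoint_iff, ← map_star]
    congr 1
    exact hA.1
  · intro x
    rw [ContinuousLinearMap.reApplyInnerSelf_apply, EuclideanSpace.inner_eq_star_dotProduct]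
    have h1 : x.ofLp ⬝ᵥ star ((Matrix.toEuclideanCLM (𝕜 := ℂ) A) x).ofLp =
        star (star x.ofLp ⬝ᵥ A *ᵥ x.ofLp) := by
      rw [Matrix.ofLp_toEuclideanCLM, ← Matrix.star_dotProduct, dotProduct_comm]
    rw [h1]
    have h2 := hA.dotProduct_mulVec_nonneg x.ofLp
    generalize star x.ofLp ⬝ᵥ A *ᵥ x.ofLp = z at h2 ⊢
    rw [Complex.nonneg_iff] at h2
    simpa using h2.1

lemma opNorm_le_of_psd_le {A B : Matrix n n ℂ} (hA : A.PosSemidef) (hBA : (B - A).PosSemidef) :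
    opNorm A ≤ opNorm B := by
  refine CStarAlgebra.norm_le_norm_of_nonneg_of_le (psd_nonneg_clm hA) ?_
  have := psd_nonneg_clm hBA
  rw [map_sub] at this
  exact sub_nonneg.mp (by simpa using this)

lemma opNorm_one_le : opNorm (1 : Matrix n n ℂ) ≤ 1 := by
  rw [opNorm, _root_.map_one]
  exact ContinuousLinearMap.norm_id_le

end A
section A2
variable {n : Type*} [Fintype n] [DecidableEq n]

lemma clm_apply_eq (A : Matrix n n ℂ) (y : n → ℂ) :
    Matrix.toEuclideanCLM (𝕜 := ℂ) A ((WithLp.equiv 2 (n → ℂ)).symm y) =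
      (WithLp.equiv 2 (n → ℂ)).symm (A *ᵥ y) := by
  exact Matrix.toEuclideanCLM_toLp A y

lemma herm_qform_star {A : Matrix n n ℂ} (hA : A.IsHermitian) (x : n → ℂ) :
    star (star x ⬝ᵥ A *ᵥ x) = star x ⬝ᵥ A *ᵥ x := by
  conv_rhs => rw [Matrix.star_dotProduct]
  congr 1
  rw [Matrix.star_mulVec, ← Matrix.dotProduct_mulVec, hA.eq]

lemma qform_abs_le {A : Matrix n n ℂ} (x : n → ℂ) :
    ‖star x ⬝ᵥ A *ᵥ x‖ ≤ opNorm A * (star x ⬝ᵥ x).re := by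
  set X := (WithLp.equiv 2 (n → ℂ)).symm x with hX
  have h1 : star x ⬝ᵥ A *ᵥ x = inner (𝕜 := ℂ) X (Matrix.toEuclideanCLM (𝕜 := ℂ) A X) := by
    rw [hX, clm_apply_eq, dotProduct_comm]; rfl
  have h2 : star x ⬝ᵥ x = inner (𝕜 := ℂ) X X := by
    rw [hX, dotProduct_comm]; rfl
  rw [h1, h2]
  have hre : (inner (𝕜 := ℂ) X X).re = ‖X‖ ^ 2 := by
    rw [inner_self_eq_norm_sq_to_K (𝕜 := ℂ)]
    norm_cast
  rw [hre]
  calc ‖inner (𝕜 := ℂ) X (Matrix.toEuclideanCLM (𝕜 := ℂ) A X)‖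
      ≤ ‖X‖ * ‖Matrix.toEuclideanCLM (𝕜 := ℂ) A X‖ := by
        simpa using
          norm_inner_le_norm (𝕜 := ℂ) X (Matrix.toEuclideanCLM (𝕜 := ℂ) A X)
    _ ≤ ‖X‖ * (opNorm A * ‖X‖) := by
        gcongr
        exact (Matrix.toEuclideanCLM (𝕜 := ℂ) A).le_opNorm X
    _ = opNorm A * ‖X‖ ^ 2 := by ring

lemma psd_smul_one_add {A : Matrix n n ℂ} {c : ℝ} (hA : A.IsHermitian) (hc : opNorm A ≤ c) :
    ((c • (1 : Matrix n n ℂ)) + A).PosSemidef := by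
  have hc0 : 0 ≤ c := le_trans (norm_nonneg _) hc
  refine Matrix.PosSemidef.of_dotProduct_mulVec_nonneg ?_ ?_
  · have h1 : (c • (1 : Matrix n n ℂ)).IsHermitian := by
      have : c • (1 : Matrix n n ℂ) = (c : ℂ) • 1 := by
        ext p q; simp [Matrix.smul_apply, Complex.real_smul]
      rw [Matrix.IsHermitian, this, Matrix.conjTranspose_smul]
      simp
    exact h1.add hA
  · intro x
    have hmul : star x ⬝ᵥ (c • (1 : Matrix n n ℂ) + A) *ᵥ x
        = (c : ℂ) * (star x ⬝ᵥ x) + star x ⬝ᵥ A *ᵥ x := by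
      rw [Matrix.add_mulVec, dotProduct_add]
      congr 1
      rw [Matrix.smul_mulVec, Matrix.one_mulVec, dotProduct_smul]
      simp [Complex.real_smul]
    rw [hmul]
    set w := star x ⬝ᵥ x with hw
    set z := star x ⬝ᵥ A *ᵥ x with hz
    have hwpos : 0 ≤ w := dotProduct_star_self_nonneg x
    rw [Complex.nonneg_iff] at hwpos ⊢
    have hwim : w.im = 0 := hwpos.2.symm
    have hzim : z.im = 0 := by
      have := herm_qform_star hA x
      rw [← hz] at this
      exact Complex.conj_eq_iff_im.mp this
    constructor
    · have habs := qform_abs_le (A := A) x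
      rw [← hz, ← hw] at habs
      have : -(c * w.re) ≤ z.re := by
        have h3 : ‖z‖ ≤ c * w.re := le_trans habs (by nlinarith [hwpos.1])
        have h4 : -‖z‖ ≤ z.re := by
          have := Complex.abs_re_le_norm z
          cases abs_cases z.re <;> linarith
        linarith
      simp only [Complex.add_re, Complex.mul_re, Complex.ofReal_re, Complex.ofReal_im, hwim]
      simp only [mul_zero, zero_mul, sub_zero]
      linarith
    · rw [Complex.add_im, Complex.mul_im, hzim, hwim]
      simp

lemma cs_sum {ι : Type*} (s : Finset ι) (f g : ι → ℝ) (hf : ∀ i, 0 ≤ f i) (hg : ∀ i, 0 ≤ g i) :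
    ∑ i ∈ s, f i * g i ≤ Real.sqrt (∑ i ∈ s, f i ^ 2) * Real.sqrt (∑ i ∈ s, g i ^ 2) := by
  have h := Finset.sum_mul_sq_le_sq_mul_sq s f g
  have h0 : 0 ≤ ∑ i ∈ s, f i * g i :=
    Finset.sum_nonneg fun i _ => mul_nonneg (hf i) (hg i)
  calc ∑ i ∈ s, f i * g i = Real.sqrt ((∑ i ∈ s, f i * g i) ^ 2) := by
        rw [Real.sqrt_sq h0]
    _ ≤ Real.sqrt ((∑ i ∈ s, f i ^ 2) * ∑ i ∈ s, g i ^ 2) := Real.sqrt_le_sqrt h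
    _ = _ := Real.sqrt_mul (Finset.sum_nonneg fun i _ => sq_nonneg _) _

lemma opNorm_le_frobNorm (A : Matrix n n ℂ) : opNorm A ≤ frobNorm A := by
  rw [opNorm]
  refine ContinuousLinearMap.opNorm_le_bound _ (Real.sqrt_nonneg _) fun x => ?_
  set y := WithLp.equiv 2 (n → ℂ) x with hy
  have hxy : x = (WithLp.equiv 2 (n → ℂ)).symm y := by simp [hy]
  have happ : Matrix.toEuclideanCLM (𝕜 := ℂ) A x = (WithLp.equiv 2 (n → ℂ)).symm (A *ᵥ y) := by
    rw [hxy, clm_apply_eq]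
  have hnx : ‖x‖ = Real.sqrt (∑ q, ‖y q‖ ^ 2) := by
    rw [EuclideanSpace.norm_eq]
    congr 1
  have hrow : ∀ p, ‖(A *ᵥ y) p‖
      ≤ Real.sqrt (∑ q, ‖A p q‖ ^ 2) * ‖x‖ := by
    intro p
    have h1 : (A *ᵥ y) p = ∑ q, A p q * y q := by
      simp [Matrix.mulVec, dotProduct]
    rw [h1]
    calc ‖∑ q, A p q * y q‖ ≤ ∑ q, ‖A p q‖ * ‖y q‖ := by
          simpa [norm_mul] using (norm_sum_le Finset.univ (fun q => A p q * y q))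
      _ ≤ Real.sqrt (∑ q, ‖A p q‖ ^ 2) * Real.sqrt (∑ q, ‖y q‖ ^ 2) :=
          cs_sum _ _ _ (fun q => norm_nonneg _) (fun q => norm_nonneg _)
      _ = _ := by rw [hnx]
  have hTx : ‖Matrix.toEuclideanCLM (𝕜 := ℂ) A x‖
      = Real.sqrt (∑ p, ‖(A *ᵥ y) p‖ ^ 2) := by
    rw [happ, EuclideanSpace.norm_eq]
    congr 1
  rw [hTx, frobNorm]
  have hsum : ∑ p, ‖(A *ᵥ y) p‖ ^ 2
      ≤ ∑ p, (∑ q, ‖A p q‖ ^ 2) * ‖x‖ ^ 2 := by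
    refine Finset.sum_le_sum fun p _ => ?_
    have := hrow p
    have h2 : ‖(A *ᵥ y) p‖ ^ 2
        ≤ (Real.sqrt (∑ q, ‖A p q‖ ^ 2) * ‖x‖) ^ 2 := by
      have h0 : (0:ℝ) ≤ ‖(A *ᵥ y) p‖ := norm_nonneg _
      nlinarith
    calc ‖(A *ᵥ y) p‖ ^ 2 ≤ (Real.sqrt (∑ q, ‖A p q‖ ^ 2) * ‖x‖) ^ 2 := h2
      _ = (Real.sqrt (∑ q, ‖A p q‖ ^ 2)) ^ 2 * ‖x‖ ^ 2 := by ring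
      _ = (∑ q, ‖A p q‖ ^ 2) * ‖x‖ ^ 2 := by
          rw [Real.sq_sqrt (Finset.sum_nonneg fun q _ => sq_nonneg _)]
  calc Real.sqrt (∑ p, ‖(A *ᵥ y) p‖ ^ 2)
      ≤ Real.sqrt (∑ p, (∑ q, ‖A p q‖ ^ 2) * ‖x‖ ^ 2) := Real.sqrt_le_sqrt hsum
    _ = Real.sqrt ((∑ p, ∑ q, ‖A p q‖ ^ 2) * ‖x‖ ^ 2) := by
        rw [← Finset.sum_mul]
    _ = Real.sqrt (∑ p, ∑ q, ‖A p q‖ ^ 2) * Real.sqrt (‖x‖ ^ 2) := by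
        rw [Real.sqrt_mul (Finset.sum_nonneg fun p _ => Finset.sum_nonneg fun q _ => sq_nonneg _)]
    _ = Real.sqrt (∑ p, ∑ q, ‖A p q‖ ^ 2) * ‖x‖ := by
        rw [Real.sqrt_sq (norm_nonneg _)]

end A2
section B

@[simp] lemma prodMat_apply (P : ∀ i, Matrix (Fin (d i)) (Fin (d i)) ℂ)
    (p q : ∀ i, Fin (d i)) : prodMat P p q = ∏ i, P i (p i) (q i) := rfl

lemma prodMat_one : prodMat (fun i => (1 : Matrix (Fin (d i)) (Fin (d i)) ℂ)) = 1 := by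
  ext p q
  by_cases h : p = q
  · subst h
    simp [Matrix.one_apply]
  · have : ∃ i, p i ≠ q i := by
      by_contra hc
      push_neg at hc
      exact h (funext hc)
    obtain ⟨i, hi⟩ := this
    rw [prodMat_apply, Finset.prod_eq_zero (Finset.mem_univ i) (by simp [Matrix.one_apply, hi]),
      Matrix.one_apply_ne h]

lemma prodMat_smul (s : ∀ i, ℝ) (P : ∀ i, Matrix (Fin (d i)) (Fin (d i)) ℂ) :
    prodMat (fun i => s i • P i) = (∏ i, s i) • prodMat P := by
  ext p q
  simp only [prodMat_apply, Matrix.smul_apply, Complex.real_smul]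
  rw [Finset.prod_mul_distrib]
  norm_cast

lemma prodMat_sum {κ : Fin m → Type*} [∀ i, Fintype (κ i)]
    (f : ∀ i, κ i → Matrix (Fin (d i)) (Fin (d i)) ℂ) :
    prodMat (fun i => ∑ b, f i b) = ∑ ε : ∀ i, κ i, prodMat (fun i => f i (ε i)) := by
  ext p q
  simp only [prodMat_apply, Matrix.sum_apply]
  exact Fintype.prod_sum fun i b => f i b (p i) (q i)

lemma prodMat_sub_single (M N : ∀ i, Matrix (Fin (d i)) (Fin (d i)) ℂ) (j0 : Fin m)
    (h : ∀ i, i ≠ j0 → M i = N i) :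
    prodMat M - prodMat N = prodMat (Function.update M j0 (M j0 - N j0)) := by
  ext p q
  simp only [Matrix.sub_apply, prodMat_apply]
  rw [← Finset.mul_prod_erase Finset.univ (fun i => M i (p i) (q i)) (Finset.mem_univ j0),
    ← Finset.mul_prod_erase Finset.univ (fun i => N i (p i) (q i)) (Finset.mem_univ j0),
    ← Finset.mul_prod_erase Finset.univ
      (fun i => (Function.update M j0 (M j0 - N j0)) i (p i) (q i)) (Finset.mem_univ j0)]
  have h1 : ∏ i ∈ Finset.univ.erase j0, N i (p i) (q i)
      = ∏ i ∈ Finset.univ.erase j0, M i (p i) (q i) := by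
    refine Finset.prod_congr rfl fun i hi => ?_
    rw [h i (Finset.mem_erase.mp hi).1]
  have h2 : ∏ i ∈ Finset.univ.erase j0,
      (fun i => (Function.update M j0 (M j0 - N j0)) i (p i) (q i)) i
      = ∏ i ∈ Finset.univ.erase j0, M i (p i) (q i) := by
    refine Finset.prod_congr rfl fun i hi => ?_
    simp only []
    rw [Function.update_of_ne (Finset.mem_erase.mp hi).1]
  rw [h1, h2]
  simp only [Function.update_self, Matrix.sub_apply]
  ring

end B

section C
variable (S : ∀ i, Submodule ℝ (Matrix (Fin (d i)) (Fin (d i)) ℂ))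

lemma isSep_elem {R : ∀ i, Matrix (Fin (d i)) (Fin (d i)) ℂ}
    (h : ∀ i, R i ∈ S i ∧ (R i).PosSemidef) : IsSep S (prodMat R) :=
  ⟨1, fun _ => R, fun _ i => h i, by simp⟩

lemma isSep_zero : IsSep S 0 := ⟨0, fun j _ => j.elim0, fun j => j.elim0, by simp⟩

lemma IsSep.add {X Y : Matrix (∀ i, Fin (d i)) (∀ i, Fin (d i)) ℂ}
    (hX : IsSep S X) (hY : IsSep S Y) : IsSep S (X + Y) := by
  obtain ⟨k₁, P₁, h₁, rfl⟩ := hX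
  obtain ⟨k₂, P₂, h₂, rfl⟩ := hY
  refine ⟨k₁ + k₂, Fin.addCases P₁ P₂, fun j i => ?_, ?_⟩
  · refine Fin.addCases (fun j₁ => ?_) (fun j₂ => ?_) j
    · simpa only [Fin.addCases_left] using h₁ j₁ i
    · simpa only [Fin.addCases_right] using h₂ j₂ i
  · rw [Fin.sum_univ_add]
    congr 1 <;> refine Finset.sum_congr rfl fun j _ => ?_
    · simp only [Fin.addCases_left]
    · simp only [Fin.addCases_right]

lemma isSep_sum {ι : Type*} (s : Finset ι) (f : ι → Matrix (∀ i, Fin (d i)) (∀ i, Fin (d i)) ℂ)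
    (h : ∀ j ∈ s, IsSep S (f j)) : IsSep S (∑ j ∈ s, f j) := by
  classical
  induction s using Finset.cons_induction with
  | empty => simpa using isSep_zero S
  | cons a s' ha ih =>
    rw [Finset.sum_cons]
    exact IsSep.add S (h a (Finset.mem_cons_self a s'))
      (ih fun j hj => h j (Finset.mem_cons_of_mem hj))

end C


section D
variable (S : ∀ i, Submodule ℝ (Matrix (Fin (d i)) (Fin (d i)) ℂ))

lemma opNorm_neg {n : Type*} [Fintype n] [DecidableEq n] (A : Matrix n n ℂ) :
    opNorm (-A) = opNorm A := by
  rw [opNorm, map_neg, norm_neg, opNorm]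

lemma opNorm_zero {n : Type*} [Fintype n] [DecidableEq n] :
    opNorm (0 : Matrix n n ℂ) = 0 := by
  rw [opNorm, map_zero, norm_zero]

lemma opNorm_add {n : Type*} [Fintype n] [DecidableEq n] (A B : Matrix n n ℂ) :
    opNorm (A + B) ≤ opNorm A + opNorm B := by
  rw [opNorm, map_add]
  exact (norm_add_le _ _).trans (by rw [opNorm, opNorm])

lemma psd_smul_one {n : Type*} [Fintype n] [DecidableEq n] {c : ℝ} (hc : 0 ≤ c) :
    ((c • (1 : Matrix n n ℂ))).PosSemidef := by
  have := psd_smul_one_add (A := (0 : Matrix n n ℂ)) (c := c) Matrix.isHermitian_zero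
    (by rw [opNorm_zero]; exact hc)
  simpa using this

lemma psd_smul_one_sub {n : Type*} [Fintype n] [DecidableEq n] {A : Matrix n n ℂ} {c : ℝ}
    (hA : A.IsHermitian) (hc : opNorm A ≤ c) : ((c • (1 : Matrix n n ℂ)) - A).PosSemidef := by
  have := psd_smul_one_add (A := -A) (c := c) hA.neg (by rwa [opNorm_neg])
  rwa [← sub_eq_add_neg] at this

lemma psd_real_smul {n : Type*} [Fintype n] [DecidableEq n] {A : Matrix n n ℂ} {r : ℝ}
    (hA : A.PosSemidef) (hr : 0 ≤ r) : (r • A).PosSemidef := by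
  refine Matrix.PosSemidef.of_dotProduct_mulVec_nonneg ?_ ?_
  · rw [Matrix.IsHermitian, real_smul_mat, Matrix.conjTranspose_smul]
    simp [hA.1.eq]
  · intro x
    rw [real_smul_mat, Matrix.smul_mulVec, dotProduct_smul, smul_eq_mul]
    exact mul_nonneg (Complex.zero_le_real.mpr hr) (hA.dotProduct_mulVec_nonneg x)

lemma sep_smul_one_sub (hone : ∀ i, (1 : Matrix (Fin (d i)) (Fin (d i)) ℂ) ∈ S i)
    (R : ∀ i, Matrix (Fin (d i)) (Fin (d i)) ℂ) (c : Fin m → ℝ)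
    (hR : ∀ i, R i ∈ S i) (hRpsd : ∀ i, (R i).PosSemidef) (hc : ∀ i, opNorm (R i) ≤ c i) :
    IsSep S ((∏ i, c i) • (1 : Matrix (∀ i, Fin (d i)) (∀ i, Fin (d i)) ℂ) - prodMat R) := by
  have hc0 : ∀ i, 0 ≤ c i := fun i => le_trans (opNorm_nonneg _) (hc i)
  set F : ℕ → Matrix (∀ i, Fin (d i)) (∀ i, Fin (d i)) ℂ :=
    fun j => prodMat (fun i : Fin m => if (i : ℕ) < j then c i • 1 else R i) with hF
  have hF0 : F 0 = prodMat R := by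
    show prodMat (fun i : Fin m => if (i : ℕ) < 0 then c i • 1 else R i) = prodMat R
    have h8 : (fun i : Fin m => if (i : ℕ) < 0 then c i • 1 else R i) = R := by
      funext i
      exact if_neg (Nat.not_lt_zero _)
    rw [h8]
  have hFm : F m = (∏ i, c i) • (1 : Matrix (∀ i, Fin (d i)) (∀ i, Fin (d i)) ℂ) := by
    show prodMat (fun i : Fin m => if (i : ℕ) < m then c i • 1 else R i) = _
    have h9 : (fun i : Fin m => if (i : ℕ) < m then c i • (1 : Matrix (Fin (d i)) (Fin (d i)) ℂ)
        else R i) = fun i => c i • (1 : Matrix (Fin (d i)) (Fin (d i)) ℂ) := by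
      funext i
      rw [if_pos i.isLt]
    rw [h9, prodMat_smul, prodMat_one]
  have htel : (∏ i, c i) • (1 : Matrix (∀ i, Fin (d i)) (∀ i, Fin (d i)) ℂ) - prodMat R
      = ∑ j ∈ Finset.range m, (F (j + 1) - F j) := by
    rw [Finset.sum_range_sub, hF0, hFm]
  rw [htel]
  refine isSep_sum S _ _ fun j hj => ?_
  have hjm : j < m := Finset.mem_range.mp hj
  set j0 : Fin m := ⟨j, hjm⟩ with hj0
  have hdiff : F (j + 1) - F j = prodMat (Function.update
      (fun i : Fin m => if (i : ℕ) < j + 1 then c i • 1 else R i) j0 (c j0 • 1 - R j0)) := by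
    show prodMat (fun i : Fin m => if (i : ℕ) < j + 1 then c i • 1 else R i)
        - prodMat (fun i : Fin m => if (i : ℕ) < j then c i • 1 else R i) = _
    rw [prodMat_sub_single _ _ j0 (fun i hi => by
      have : (i : ℕ) ≠ j := fun hcon => hi (Fin.ext hcon)
      by_cases h2 : (i : ℕ) < j
      · rw [if_pos (Nat.lt_succ_of_lt h2), if_pos h2]
      · rw [if_neg (by omega), if_neg h2])]
    rw [if_pos (show ((j0 : Fin m) : ℕ) < j + 1 from Nat.lt_succ_self j),
      if_neg (show ¬((j0 : Fin m) : ℕ) < j from Nat.lt_irrefl j)]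
  rw [hdiff]
  refine isSep_elem S fun i => ?_
  by_cases hij : i = j0
  · rw [hij, Function.update_self]
    exact ⟨Submodule.sub_mem _ (Submodule.smul_mem _ _ (hone j0)) (hR j0),
      psd_smul_one_sub (hRpsd j0).1 (hc j0)⟩
  · rw [Function.update_of_ne hij]
    by_cases h2 : (i : ℕ) < j + 1
    · rw [if_pos h2]
      exact ⟨Submodule.smul_mem _ _ (hone i), psd_smul_one (hc0 i)⟩
    · rw [if_neg h2]
      exact ⟨hR i, hRpsd i⟩

end D

section E
variable {k : ℕ} (S : ∀ i, Submodule ℝ (Matrix (Fin (d i)) (Fin (d i)) ℂ))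
  (hherm : ∀ i, ∀ A ∈ S i, A.IsHermitian)
  (hone : ∀ i, (1 : Matrix (Fin (d i)) (Fin (d i)) ℂ) ∈ S i)
  (Φ : Matrix (∀ i, Fin (d i)) (∀ i, Fin (d i)) ℂ →ₗ[ℝ] Matrix (Fin k) (Fin k) ℂ)
  (hΦ : ∀ Q, IsSep S Q → (Φ Q).PosSemidef)

include hherm hone hΦ in
lemma elem_bound (A : ∀ i, Matrix (Fin (d i)) (Fin (d i)) ℂ) (hA : ∀ i, A i ∈ S i) :
    opNorm (Φ (prodMat A)) ≤ 2 ^ m * (∏ i, opNorm (A i)) * opNorm (Φ 1) := by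
  classical
  set c : Fin m → ℝ := fun i => opNorm (A i) with hc
  have hc0 : ∀ i, 0 ≤ c i := fun i => opNorm_nonneg _
  set P : ∀ i, Matrix (Fin (d i)) (Fin (d i)) ℂ :=
    fun i => (2⁻¹ : ℝ) • (c i • 1 + A i) with hP
  set Q : ∀ i, Matrix (Fin (d i)) (Fin (d i)) ℂ :=
    fun i => (2⁻¹ : ℝ) • (c i • 1 - A i) with hQ
  have hPm : ∀ i, P i ∈ S i := fun i =>
    Submodule.smul_mem _ _ (Submodule.add_mem _ (Submodule.smul_mem _ _ (hone i)) (hA i))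
  have hQm : ∀ i, Q i ∈ S i := fun i =>
    Submodule.smul_mem _ _ (Submodule.sub_mem _ (Submodule.smul_mem _ _ (hone i)) (hA i))
  have hPpsd : ∀ i, (P i).PosSemidef := fun i =>
    psd_real_smul (psd_smul_one_add (hherm i _ (hA i)) le_rfl) (by norm_num)
  have hQpsd : ∀ i, (Q i).PosSemidef := fun i =>
    psd_real_smul (psd_smul_one_sub (hherm i _ (hA i)) le_rfl) (by norm_num)
  have hop1 : ∀ i, opNorm (c i • (1 : Matrix (Fin (d i)) (Fin (d i)) ℂ)) ≤ c i := by
    intro i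
    rw [opNorm_smul, abs_of_nonneg (hc0 i)]
    calc c i * opNorm (1 : Matrix (Fin (d i)) (Fin (d i)) ℂ) ≤ c i * 1 :=
      mul_le_mul_of_nonneg_left opNorm_one_le (hc0 i)
    _ = c i := mul_one _
  have hPop : ∀ i, opNorm (P i) ≤ c i := by
    intro i
    rw [hP]
    simp only []
    rw [opNorm_smul]
    rw [abs_of_nonneg (by norm_num : (0:ℝ) ≤ (2⁻¹ : ℝ))]
    have := (opNorm_add (c i • (1 : Matrix (Fin (d i)) (Fin (d i)) ℂ)) (A i)).trans
      (add_le_add (hop1 i) le_rfl)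
    calc (2⁻¹ : ℝ) * opNorm (c i • 1 + A i) ≤ (2⁻¹ : ℝ) * (c i + c i) := by
          apply mul_le_mul_of_nonneg_left _ (by norm_num)
          exact this
      _ = c i := by ring
  have hQop : ∀ i, opNorm (Q i) ≤ c i := by
    intro i
    rw [hQ]
    simp only []
    rw [opNorm_smul]
    rw [abs_of_nonneg (by norm_num : (0:ℝ) ≤ (2⁻¹ : ℝ))]
    have h2 : opNorm (c i • (1 : Matrix (Fin (d i)) (Fin (d i)) ℂ) - A i) ≤ c i + c i := by
      rw [sub_eq_add_neg]
      exact (opNorm_add _ _).trans (add_le_add (hop1 i) (le_of_eq (opNorm_neg _)))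
    calc (2⁻¹ : ℝ) * opNorm (c i • 1 - A i) ≤ (2⁻¹ : ℝ) * (c i + c i) := by
          apply mul_le_mul_of_nonneg_left h2 (by norm_num)
      _ = c i := by ring
  -- expansion
  set g : ∀ i, Bool → Matrix (Fin (d i)) (Fin (d i)) ℂ :=
    fun i b => if b then (-1 : ℝ) • Q i else P i with hg
  have hAg : A = fun i => ∑ b, g i b := by
    funext i
    rw [Fintype.sum_bool]
    have h1 : g i true = (-1 : ℝ) • Q i := by simp [hg]
    have h2 : g i false = P i := by simp [hg]
    rw [h1, h2]
    simp only [hP, hQ]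
    module
  have hexp : prodMat A = ∑ ε : ∀ i, Bool, prodMat (fun i => g i (ε i)) := by
    conv_lhs => rw [hAg]
    exact prodMat_sum g
  have hkey : ∀ ε : ∀ i, Bool,
      opNorm (Φ (prodMat (fun i => g i (ε i)))) ≤ (∏ i, c i) * opNorm (Φ 1) := by
    intro ε
    set R : ∀ i, Matrix (Fin (d i)) (Fin (d i)) ℂ := fun i => if ε i then Q i else P i with hR
    set s : Fin m → ℝ := fun i => if ε i then (-1 : ℝ) else 1 with hs
    have hgR : (fun i => g i (ε i)) = fun i => s i • R i := by
      funext i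
      rw [hg, hR, hs]
      by_cases h : ε i
      · simp [h]
      · simp [h]
    have hRm : ∀ i, R i ∈ S i := fun i => by
      rw [hR]; dsimp only; split <;> [exact hQm i; exact hPm i]
    have hRpsd : ∀ i, (R i).PosSemidef := fun i => by
      rw [hR]; dsimp only; split <;> [exact hQpsd i; exact hPpsd i]
    have hRop : ∀ i, opNorm (R i) ≤ c i := fun i => by
      rw [hR]; dsimp only; split <;> [exact hQop i; exact hPop i]
    rw [hgR, prodMat_smul, LinearMap.map_smul, opNorm_smul]
    have habs : |∏ i, s i| = 1 := by
      rw [Finset.abs_prod]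
      rw [Finset.prod_eq_one]
      intro i _
      rw [hs]
      dsimp only
      split <;> simp
    rw [habs, one_mul]
    have h1 : (Φ (prodMat R)).PosSemidef := hΦ _ (isSep_elem S fun i => ⟨hRm i, hRpsd i⟩)
    have h2 : ((∏ i, c i) • Φ 1 - Φ (prodMat R)).PosSemidef := by
      have := hΦ _ (sep_smul_one_sub S hone R c hRm hRpsd hRop)
      rwa [map_sub, LinearMap.map_smul] at this
    calc opNorm (Φ (prodMat R)) ≤ opNorm ((∏ i, c i) • Φ 1) := opNorm_le_of_psd_le h1 h2
      _ = (∏ i, c i) * opNorm (Φ 1) := by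
          rw [opNorm_smul, abs_of_nonneg (Finset.prod_nonneg fun i _ => hc0 i)]
  calc opNorm (Φ (prodMat A)) = opNorm (∑ ε : ∀ i, Bool, Φ (prodMat (fun i => g i (ε i)))) := by
        rw [hexp, _root_.map_sum]
    _ ≤ ∑ ε : ∀ i, Bool, opNorm (Φ (prodMat (fun i => g i (ε i)))) := by
        exact opNorm_sum _ _
    _ ≤ ∑ _ε : ∀ i, Bool, (∏ i, c i) * opNorm (Φ 1) := Finset.sum_le_sum fun ε _ => hkey ε
    _ = 2 ^ m * (∏ i, c i) * opNorm (Φ 1) := by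
        rw [Finset.sum_const, Finset.card_univ]
        have hcard : Fintype.card (∀ _ : Fin m, Bool) = 2 ^ m := by
          simp [Fintype.card_pi]
        rw [hcard, nsmul_eq_mul]
        push_cast
        ring

end E

section F
variable {n : Type*} [Fintype n]

/-- Real-linear embedding of complex matrices into a real Euclidean space,
isometric for the Frobenius norm. -/
noncomputable def toE : Matrix n n ℂ →ₗ[ℝ] EuclideanSpace ℝ (n × n × Fin 2) where
  toFun A := (WithLp.equiv 2 _).symm fun x =>
    if x.2.2 = 0 then (A x.1 x.2.1).re else (A x.1 x.2.1).im
  map_add' A B := by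
    ext x
    simp [Matrix.add_apply]
    split <;> simp
  map_smul' r A := by
    ext x
    simp only [Matrix.smul_apply, Complex.real_smul, WithLp.equiv_symm_apply, WithLp.ofLp_toLp, RingHom.id_apply,
      PiLp.smul_apply, smul_eq_mul, Complex.mul_re, Complex.mul_im, Complex.ofReal_re,
      Complex.ofReal_im]
    split <;> ring

lemma toE_apply (A : Matrix n n ℂ) (x : n × n × Fin 2) :
    toE A x = if x.2.2 = 0 then (A x.1 x.2.1).re else (A x.1 x.2.1).im := rfl

/-- The complex Frobenius inner product. -/
noncomputable def cInner (A B : Matrix n n ℂ) : ℂ :=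
  ∑ p, ∑ q, (starRingEnd ℂ) (A p q) * B p q

lemma inner_toE (A B : Matrix n n ℂ) :
    inner (𝕜 := ℝ) (toE A) (toE B) = (cInner A B).re := by
  rw [cInner]
  rw [PiLp.inner_apply]
  rw [Fintype.sum_prod_type]
  simp only [RCLike.inner_apply, starRingEnd_apply, star_trivial]
  rw [Complex.re_sum]
  refine Finset.sum_congr rfl fun p _ => ?_
  rw [Fintype.sum_prod_type, Complex.re_sum]
  refine Finset.sum_congr rfl fun q _ => ?_
  rw [Fin.sum_univ_two]
  simp only [toE_apply, Complex.mul_re, Complex.conj_re, Complex.conj_im]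
  norm_num
  ring

lemma norm_toE (A : Matrix n n ℂ) : ‖toE A‖ = frobNorm A := by
  rw [EuclideanSpace.norm_eq, frobNorm]
  congr 1
  rw [Fintype.sum_prod_type]
  refine Finset.sum_congr rfl fun p _ => ?_
  rw [Fintype.sum_prod_type]
  refine Finset.sum_congr rfl fun q _ => ?_
  rw [Fin.sum_univ_two]
  simp only [toE_apply, Real.norm_eq_abs, sq_abs]
  norm_num
  rw [Complex.sq_norm, Complex.normSq_apply]
  ring

lemma toE_inj : Function.Injective (toE : Matrix n n ℂ →ₗ[ℝ] _) := by
  intro A B h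
  ext p q
  have h0 := congr_fun (congr_arg (WithLp.equiv 2 _) h) (p, q, 0)
  have h1 := congr_fun (congr_arg (WithLp.equiv 2 _) h) (p, q, 1)
  change toE A (p, q, 0) = toE B (p, q, 0) at h0
  change toE A (p, q, 1) = toE B (p, q, 1) at h1
  simp only [toE_apply] at h0 h1
  exact Complex.ext (by simpa using h0) (by simpa using h1)

lemma cInner_real {A B : Matrix n n ℂ} (hA : A.IsHermitian) (hB : B.IsHermitian) :
    cInner A B = ((cInner A B).re : ℂ) := by
  have hconj : (starRingEnd ℂ) (cInner A B) = cInner A B := by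
    rw [cInner, map_sum]
    rw [Finset.sum_comm]
    refine Finset.sum_congr rfl fun q _ => ?_
    rw [map_sum]
    refine Finset.sum_congr rfl fun p _ => ?_
    rw [_root_.map_mul, RingHomCompTriple.comp_apply]
    have e1 : A q p = (starRingEnd ℂ) (A p q) := by
      rw [← hA.apply q p]
      rfl
    have e2 : (starRingEnd ℂ) (B q p) = B p q := by
      rw [← hB.apply p q]
      rfl
    rw [RingHom.id_apply, e1, e2]
  exact (Complex.conj_eq_iff_re.mp hconj).symm

end F

lemma cInner_prodMat (P R : ∀ i, Matrix (Fin (d i)) (Fin (d i)) ℂ) :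
    cInner (prodMat P) (prodMat R) = ∏ i, cInner (P i) (R i) := by
  rw [cInner]
  have h1 : ∀ p q : ∀ i, Fin (d i), (starRingEnd ℂ) (prodMat P p q) * prodMat R p q
      = ∏ i, (starRingEnd ℂ) (P i (p i) (q i)) * R i (p i) (q i) := by
    intro p q
    rw [prodMat_apply, prodMat_apply, map_prod, ← Finset.prod_mul_distrib]
  calc (∑ p, ∑ q, (starRingEnd ℂ) (prodMat P p q) * prodMat R p q)
      = ∑ p : ∀ i, Fin (d i), ∏ i, (∑ b, (starRingEnd ℂ) (P i (p i) b) * R i (p i) b) := by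
        refine Finset.sum_congr rfl fun p _ => ?_
        rw [Fintype.prod_sum fun i b => (starRingEnd ℂ) (P i (p i) b) * R i (p i) b]
        refine Finset.sum_congr rfl fun q _ => (h1 p q)
    _ = ∏ i, ∑ a, ∑ b, (starRingEnd ℂ) (P i a b) * R i a b := by
        rw [Fintype.prod_sum fun i a => ∑ b, (starRingEnd ℂ) (P i a b) * R i a b]
    _ = ∏ i, cInner (P i) (R i) := by
        refine Finset.prod_congr rfl fun i _ => rfl


/-- Norm bound for super-operators positive on the separable cone:
if `Φ` maps every `(S₁;…;S_m)`-separable operator to a positive semidefinite operator,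
then `‖Φ(X)‖ ≤ 2^(m-1) √n (n+1) ‖X‖_F ‖Φ(I)‖` for every `X ∈ S₁ ⊗ ⋯ ⊗ S_m`. -/
theorem opNorm_apply_le_of_pos_on_sep {m k : ℕ} {d : Fin m → ℕ}
    (S : ∀ i, Submodule ℝ (Matrix (Fin (d i)) (Fin (d i)) ℂ))
    (hherm : ∀ i, ∀ A ∈ S i, A.IsHermitian)
    (hone : ∀ i, (1 : Matrix (Fin (d i)) (Fin (d i)) ℂ) ∈ S i)
    (Φ : Matrix (∀ i, Fin (d i)) (∀ i, Fin (d i)) ℂ →ₗ[ℝ] Matrix (Fin k) (Fin k) ℂ)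
    (hΦ : ∀ Q, IsSep S Q → (Φ Q).PosSemidef)
    (X : Matrix (∀ i, Fin (d i)) (∀ i, Fin (d i)) ℂ) (hX : X ∈ tensorSpan S) :
    opNorm (Φ X) ≤ 2 ^ (m - 1) * Real.sqrt (Module.finrank ℝ (tensorSpan S)) *
      (Module.finrank ℝ (tensorSpan S) + 1) * frobNorm X * opNorm (Φ 1) := by
  classical
  have hRHSnn : (0:ℝ) ≤ 2 ^ (m - 1) * Real.sqrt (Module.finrank ℝ (tensorSpan S)) *
      (Module.finrank ℝ (tensorSpan S) + 1) * frobNorm X * opNorm (Φ 1) := by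
    have h1 : (0:ℝ) ≤ 2 ^ (m-1) := by positivity
    have h2 := Real.sqrt_nonneg ((Module.finrank ℝ (tensorSpan S) : ℝ))
    have h3 : (0:ℝ) ≤ (Module.finrank ℝ (tensorSpan S) : ℝ) + 1 := by positivity
    exact mul_nonneg (mul_nonneg (mul_nonneg (mul_nonneg h1 h2) h3) (frobNorm_nonneg X))
      (opNorm_nonneg _)
  by_cases hne : Nonempty (∀ i, Fin (d i))
  swap
  · have hX0 : X = 0 := by
      ext p q
      exact absurd (Nonempty.intro p) hne
    rw [hX0] at hRHSnn ⊢
    rw [map_zero, opNorm_zero]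
    exact hRHSnn
  haveI : ∀ i, Nonempty (Fin (d i)) := fun i => ⟨hne.some i⟩
  -- orthonormal bases of the factor subspaces
  set V : ∀ i, Submodule ℝ (EuclideanSpace ℝ (Fin (d i) × Fin (d i) × Fin 2)) :=
    fun i => (S i).map (toE : Matrix (Fin (d i)) (Fin (d i)) ℂ →ₗ[ℝ] _) with hV
  set nb : Fin m → ℕ := fun i => Module.finrank ℝ (V i) with hnbdef
  set B : ∀ i, OrthonormalBasis (Fin (nb i)) ℝ (V i) := fun i => stdOrthonormalBasis ℝ (V i)
    with hB
  have hex : ∀ i (a : Fin (nb i)), ∃ M, M ∈ S i ∧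
      toE M = ((B i a : V i) : EuclideanSpace ℝ (Fin (d i) × Fin (d i) × Fin 2)) := by
    intro i a
    have h1 : ((B i a : V i) : EuclideanSpace ℝ (Fin (d i) × Fin (d i) × Fin 2)) ∈ V i :=
      (B i a).2
    obtain ⟨M, hM, hM2⟩ := Submodule.mem_map.mp h1
    exact ⟨M, hM, hM2⟩
  choose e hmem htoe using hex
  have hherm' : ∀ i a, (e i a).IsHermitian := fun i a => hherm i _ (hmem i a)
  have hinner : ∀ i (a b : Fin (nb i)),
      inner (𝕜 := ℝ) (toE (e i a)) (toE (e i b)) = if a = b then (1:ℝ) else 0 := by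
    intro i a b
    rw [htoe, htoe, ← Submodule.coe_inner]
    exact orthonormal_iff_ite.mp (B i).orthonormal a b
  have hfrob1 : ∀ i a, frobNorm (e i a) = 1 := by
    intro i a
    rw [← norm_toE, htoe]
    exact (B i).orthonormal.1 a
  have hspan : ∀ i, ∀ M ∈ S i, ∃ cf : Fin (nb i) → ℝ, ∑ a, cf a • e i a = M := by
    intro i M hM
    have hMV : toE M ∈ V i := Submodule.mem_map_of_mem hM
    set M' : V i := ⟨toE M, hMV⟩ with hM'
    refine ⟨fun a => (B i).repr M' a, ?_⟩
    apply toE_inj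
    have hsr := (B i).sum_repr M'
    calc toE (∑ a, (B i).repr M' a • e i a)
        = ∑ a, (B i).repr M' a • toE (e i a) := by
          rw [map_sum]
          exact Finset.sum_congr rfl fun a _ => by rw [LinearMap.map_smul]
      _ = ((∑ a, (B i).repr M' a • B i a : V i) : EuclideanSpace ℝ _) := by
          rw [Submodule.coe_sum]
          exact Finset.sum_congr rfl fun a _ => by rw [htoe, Submodule.coe_smul]
      _ = toE M := by rw [hsr]
  -- the product basis
  set E : (∀ i, Fin (nb i)) → Matrix (∀ i, Fin (d i)) (∀ i, Fin (d i)) ℂ :=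
    fun α => prodMat (fun i => e i (α i)) with hE
  set v : (∀ i, Fin (nb i)) → EuclideanSpace ℝ _ := fun α => toE (E α) with hv'
  have hcfac : ∀ α β : ∀ i, Fin (nb i), cInner (E α) (E β) = if α = β then (1:ℂ) else 0 := by
    intro α β
    show cInner (prodMat fun i => e i (α i)) (prodMat fun i => e i (β i)) = _
    rw [cInner_prodMat]
    have hfac : ∀ i, cInner (e i (α i)) (e i (β i)) = if α i = β i then (1:ℂ) else 0 := by
      intro i
      rw [cInner_real (hherm' i (α i)) (hherm' i (β i)), ← inner_toE, hinner]
      split <;> simp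
    rw [Finset.prod_congr rfl (fun i _ => hfac i)]
    by_cases h : α = β
    · subst h
      simp
    · have h2 : ∃ i, α i ≠ β i := by
        by_contra hc
        push_neg at hc
        exact h (funext hc)
      obtain ⟨i, hi⟩ := h2
      rw [Finset.prod_eq_zero (Finset.mem_univ i)
        (show (if α i = β i then (1:ℂ) else 0) = 0 from if_neg hi), if_neg h]
  have hvon : Orthonormal ℝ v := by
    rw [orthonormal_iff_ite]
    intro α β
    show inner (𝕜 := ℝ) (toE (E α)) (toE (E β)) = _
    rw [inner_toE, hcfac]
    split <;> simp
  have hspanE : tensorSpan S = Submodule.span ℝ (Set.range E) := by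
    apply le_antisymm
    · rw [tensorSpan]
      apply Submodule.span_le.mpr
      rintro x ⟨P, hP, rfl⟩
      choose cf hcf using fun i => hspan i (P i) (hP i)
      have hPexp : prodMat P = ∑ α : ∀ i, Fin (nb i), (∏ i, cf i (α i)) • E α := by
        conv_lhs => rw [show P = fun i => ∑ a, cf i a • e i a from funext fun i => (hcf i).symm]
        rw [prodMat_sum (fun i a => cf i a • e i a)]
        exact Finset.sum_congr rfl fun α _ => prodMat_smul _ _
      rw [hPexp]
      exact Submodule.sum_mem _ fun α _ =>
        Submodule.smul_mem _ _ (Submodule.subset_span (Set.mem_range_self α))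
    · apply Submodule.span_le.mpr
      rintro x ⟨α, rfl⟩
      apply Submodule.subset_span
      exact ⟨fun i => e i (α i), fun i => hmem i (α i), rfl⟩
  have hindep : LinearIndependent ℝ E :=
    LinearIndependent.of_comp (toE : Matrix (∀ i, Fin (d i)) (∀ i, Fin (d i)) ℂ →ₗ[ℝ] _)
      hvon.linearIndependent
  have hrank : Module.finrank ℝ (tensorSpan S) = Fintype.card (∀ i, Fin (nb i)) := by
    rw [hspanE]
    exact finrank_span_eq_card hindep
  -- coefficients of X
  have hXspan : X ∈ Submodule.span ℝ (Set.range E) := hspanE ▸ hX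
  obtain ⟨cf, hcf⟩ := (Submodule.mem_span_range_iff_exists_fun ℝ).mp hXspan
  have hvX : ∑ α, cf α • v α = toE X := by
    rw [← hcf, map_sum]
    exact Finset.sum_congr rfl fun α _ => by rw [LinearMap.map_smul]
  have hnorm2 : ∑ α, cf α ^ 2 = frobNorm X ^ 2 := by
    have h1 := hvon.inner_sum cf cf Finset.univ
    rw [hvX] at h1
    have h2 : inner (𝕜 := ℝ) (toE X) (toE X) = frobNorm X ^ 2 := by
      rw [real_inner_self_eq_norm_sq, norm_toE]
    rw [h2] at h1
    rw [h1]
    exact Finset.sum_congr rfl fun α _ => by rw [starRingEnd_apply, star_trivial, sq]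
  have hcard1 : 1 ≤ (Fintype.card (∀ i, Fin (nb i)) : ℝ) := by
    have : ∀ i, 0 < nb i := by
      intro i
      have h1 : toE (1 : Matrix (Fin (d i)) (Fin (d i)) ℂ) ∈ V i :=
        Submodule.mem_map_of_mem (hone i)
      have h2 : toE (1 : Matrix (Fin (d i)) (Fin (d i)) ℂ) ≠ 0 := by
        intro hcon
        have h3 : (1 : Matrix (Fin (d i)) (Fin (d i)) ℂ) = 0 :=
          toE_inj (by rw [hcon, map_zero])
        obtain ⟨x⟩ := (inferInstance : Nonempty (Fin (d i)))
        have h4 := congr_fun (congr_fun h3 x) x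
        simp [Matrix.one_apply] at h4
      haveI : Nontrivial (V i) := by
        refine ⟨⟨toE 1, h1⟩, 0, ?_⟩
        intro hcon
        exact h2 (by simpa [Subtype.ext_iff] using hcon)
      exact Module.finrank_pos
    have h5 : 0 < Fintype.card (∀ i, Fin (nb i)) := by
      have : ∀ i, Nonempty (Fin (nb i)) := fun i => Fin.pos_iff_nonempty.mp (this i)
      haveI : Nonempty (∀ i, Fin (nb i)) := ⟨fun i => (this i).some⟩
      exact Fintype.card_pos
    exact_mod_cast h5
  -- Cauchy–Schwarz
  have hsumabs : ∑ α, |cf α| ≤ Real.sqrt (Fintype.card (∀ i, Fin (nb i))) * frobNorm X := by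
    have h1 : (∑ α, |cf α|) ^ 2 ≤ (∑ _α : ∀ i, Fin (nb i), (1:ℝ) ^ 2) * ∑ α, |cf α| ^ 2 := by
      have := Finset.sum_mul_sq_le_sq_mul_sq Finset.univ (fun _ => (1:ℝ)) (fun α => |cf α|)
      simpa using this
    have h2 : (∑ _α : ∀ i, Fin (nb i), (1:ℝ) ^ 2) = Fintype.card (∀ i, Fin (nb i)) := by
      simp
    have h3 : ∑ α, |cf α| ^ 2 = frobNorm X ^ 2 := by
      rw [← hnorm2]
      exact Finset.sum_congr rfl fun α _ => sq_abs _
    rw [h2, h3] at h1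
    have h4 : 0 ≤ ∑ α, |cf α| := Finset.sum_nonneg fun α _ => abs_nonneg _
    calc ∑ α, |cf α| = Real.sqrt ((∑ α, |cf α|) ^ 2) := (Real.sqrt_sq h4).symm
      _ ≤ Real.sqrt ((Fintype.card (∀ i, Fin (nb i)) : ℝ) * frobNorm X ^ 2) :=
          Real.sqrt_le_sqrt h1
      _ = Real.sqrt (Fintype.card (∀ i, Fin (nb i))) * frobNorm X := by
          rw [Real.sqrt_mul (by positivity), Real.sqrt_sq (frobNorm_nonneg _)]
  -- elementary bound for the basis elements
  have hbound : ∀ α, opNorm (Φ (E α)) ≤ 2 ^ m * opNorm (Φ 1) := by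
    intro α
    have h1 := elem_bound S hherm hone Φ hΦ (fun i => e i (α i)) (fun i => hmem i (α i))
    have h2 : (∏ i, opNorm (e i (α i))) ≤ 1 := by
      calc (∏ i, opNorm (e i (α i))) ≤ ∏ i, frobNorm (e i (α i)) :=
            Finset.prod_le_prod (fun i _ => opNorm_nonneg _)
              (fun i _ => opNorm_le_frobNorm _)
        _ = 1 := by
            rw [Finset.prod_congr rfl fun i _ => hfrob1 i (α i)]
            simp
    calc opNorm (Φ (E α)) ≤ 2 ^ m * (∏ i, opNorm (e i (α i))) * opNorm (Φ 1) := h1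
      _ ≤ 2 ^ m * 1 * opNorm (Φ 1) := by
          refine mul_le_mul_of_nonneg_right ?_ (opNorm_nonneg _)
          refine mul_le_mul_of_nonneg_left h2 (by positivity)
      _ = 2 ^ m * opNorm (Φ 1) := by ring
  -- final computation
  have h2m : (2:ℝ) ^ m ≤ 2 ^ (m - 1) * ((Fintype.card (∀ i, Fin (nb i)) : ℝ) + 1) := by
    cases m with
    | zero => simp
    | succ m' =>
      have : m' + 1 - 1 = m' := rfl
      rw [this, pow_succ]
      refine mul_le_mul_of_nonneg_left ?_ (by positivity)
      linarith
  have hfinal : opNorm (Φ X) ≤ (∑ α, |cf α|) * (2 ^ m * opNorm (Φ 1)) := by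
    calc opNorm (Φ X) = opNorm (∑ α, cf α • Φ (E α)) := by
          rw [← hcf, map_sum]
          congr 1
          exact Finset.sum_congr rfl fun α _ => by rw [LinearMap.map_smul]
      _ ≤ ∑ α, opNorm (cf α • Φ (E α)) := opNorm_sum _ _
      _ = ∑ α, |cf α| * opNorm (Φ (E α)) := Finset.sum_congr rfl fun α _ => opNorm_smul _ _
      _ ≤ ∑ α, |cf α| * (2 ^ m * opNorm (Φ 1)) :=
          Finset.sum_le_sum fun α _ => mul_le_mul_of_nonneg_left (hbound α) (abs_nonneg _)
      _ = (∑ α, |cf α|) * (2 ^ m * opNorm (Φ 1)) := by rw [← Finset.sum_mul]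
  rw [hrank]
  calc opNorm (Φ X) ≤ (∑ α, |cf α|) * (2 ^ m * opNorm (Φ 1)) := hfinal
    _ ≤ (Real.sqrt (Fintype.card (∀ i, Fin (nb i))) * frobNorm X) * (2 ^ m * opNorm (Φ 1)) := by
        refine mul_le_mul_of_nonneg_right hsumabs ?_
        exact mul_nonneg (by positivity) (opNorm_nonneg _)
    _ = 2 ^ m * (Real.sqrt (Fintype.card (∀ i, Fin (nb i))) * frobNorm X * opNorm (Φ 1)) := by
        ring
    _ ≤ (2 ^ (m - 1) * ((Fintype.card (∀ i, Fin (nb i)) : ℝ) + 1)) *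
        (Real.sqrt (Fintype.card (∀ i, Fin (nb i))) * frobNorm X * opNorm (Φ 1)) := by
        refine mul_le_mul_of_nonneg_right h2m ?_
        exact mul_nonneg (mul_nonneg (Real.sqrt_nonneg _) (frobNorm_nonneg _)) (opNorm_nonneg _)
    _ = 2 ^ (m - 1) * Real.sqrt (Fintype.card (∀ i, Fin (nb i))) *
        ((Fintype.card (∀ i, Fin (nb i)) : ℝ) + 1) * frobNorm X * opNorm (Φ 1) := by
        ring
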